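/- Let K be a field of characteristic zero, R = K[x,y,z], and let a ≥ c ≥ 2 be integers. Then the quotient of R by the ideal I = (x^a, y^2 − xz, z^c, x^{a−1}y, y z^{c−1}) has the weak Lefschetz property. -/

import Mathlib

open MvPolynomial

/-- The degree-`i` graded component of `R/I`, i.e. the image in `R/I` of the
space of homogeneous polynomials of degree `i`. -/
noncomputable def grComponent (K : Type*) [Field K]
    (I : Ideal (MvPolynomial (Fin 3) K)) (i : ℕ) :
    Submodule K (MvPolynomial (Fin 3) K ⧸ I) :=
  (MvPolynomial.homogeneousSubmodule (Fin 3) K i).map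
    (Ideal.Quotient.mkₐ K I).toLinearMap

/-- The Hilbert function of `R/I`. -/
noncomputable def hilb (K : Type*) [Field K]
    (I : Ideal (MvPolynomial (Fin 3) K)) (i : ℕ) : ℕ :=
  Module.finrank K (grComponent K I i)

/-- `R/I` has the weak Lefschetz property: there is a linear form `L` such that
for every `i`, multiplication by `L` from `[R/I]_i` to `[R/I]_{i+1}` is
injective or surjective. -/
def hasWLP (K : Type*) [Field K] (I : Ideal (MvPolynomial (Fin 3) K)) : Prop :=
  ∃ L : MvPolynomial (Fin 3) K, L.IsHomogeneous 1 ∧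
    ∀ i : ℕ,
      (∀ u ∈ grComponent K I i, ∀ v ∈ grComponent K I i,
          Ideal.Quotient.mk I L * u = Ideal.Quotient.mk I L * v → u = v) ∨
      (∀ w ∈ grComponent K I (i + 1), ∃ u ∈ grComponent K I i,
          Ideal.Quotient.mk I L * u = w)

namespace WLPAux

open Finsupp

variable {K : Type*} [Field K]

noncomputable def sg : MvPolynomial (Fin 2) K →ₐ[K] MvPolynomial (Fin 3) K :=
  aeval ![X 0, X 2]

noncomputable def Ek : MvPolynomial (Fin 2) K →ₐ[K] MvPolynomial (Fin 2) K :=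
  aeval ![X 0 ^ 2, X 1 ^ 2]

noncomputable def ph : MvPolynomial (Fin 3) K →ₐ[K] MvPolynomial (Fin 2) K :=
  aeval ![X 0 ^ 2, X 0 * X 1, X 1 ^ 2]

noncomputable def Iac (K : Type*) [Field K] (a c : ℕ) : Ideal (MvPolynomial (Fin 3) K) :=
  Ideal.span {(X 0 : MvPolynomial (Fin 3) K) ^ a, X 1 ^ 2 - X 0 * X 2, X 2 ^ c,
    X 0 ^ (a - 1) * X 1, X 1 * X 2 ^ (c - 1)}

noncomputable def spanW (K : Type*) [Field K] : Ideal (MvPolynomial (Fin 3) K) :=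
  Ideal.span {(X 1 : MvPolynomial (Fin 3) K) ^ 2 - X 0 * X 2}

def Jset (a c : ℕ) : Set (Fin 2 →₀ ℕ) :=
  {single 0 (2 * a), single 0 (2 * a - 1) + single 1 1,
   single 0 1 + single 1 (2 * c - 1), single 1 (2 * c)}

noncomputable def Jac (K : Type*) [Field K] (a c : ℕ) : Ideal (MvPolynomial (Fin 2) K) :=
  Ideal.span ((fun s => monomial s (1 : K)) '' Jset a c)

lemma fin2_repr (m : Fin 2 →₀ ℕ) : m = single 0 (m 0) + single 1 (m 1) := by
  ext i; fin_cases i <;> simp [Finsupp.single_apply]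

lemma fin3_repr (m : Fin 3 →₀ ℕ) : m = single 0 (m 0) + single 1 (m 1) + single 2 (m 2) := by
  ext i; fin_cases i <;> simp [Finsupp.single_apply]

lemma monomial2_eq (m : Fin 2 →₀ ℕ) (k : K) :
    (monomial m k : MvPolynomial (Fin 2) K) = C k * X 0 ^ (m 0) * X 1 ^ (m 1) := by
  rw [X_pow_eq_monomial, X_pow_eq_monomial, C_mul_monomial, monomial_mul, mul_one, mul_one,
    ← fin2_repr]

lemma monomial3_eq (m : Fin 3 →₀ ℕ) (k : K) :
    (monomial m k : MvPolynomial (Fin 3) K) = C k * X 0 ^ (m 0) * X 1 ^ (m 1) * X 2 ^ (m 2) := by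
  rw [X_pow_eq_monomial, X_pow_eq_monomial, X_pow_eq_monomial, C_mul_monomial, monomial_mul,
    monomial_mul, mul_one, mul_one, mul_one, ← fin3_repr]

lemma deg3 (m : Fin 3 →₀ ℕ) : m.degree = m 0 + m 1 + m 2 := by
  rw [Finsupp.degree_apply]
  rw [Finset.sum_subset (Finset.subset_univ _) (by intro i _ h; simpa using h)]
  simp [Fin.sum_univ_three]

/-- induction principle for homogeneous polynomials -/
lemma homog_ind {n : ℕ} (Q : MvPolynomial (Fin 3) K → Prop) (h0 : Q 0)
    (hadd : ∀ p q, Q p → Q q → Q (p + q))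
    (hmono : ∀ (m : Fin 3 →₀ ℕ) (k : K), k ≠ 0 → m 0 + m 1 + m 2 = n → Q (monomial m k))
    (F : MvPolynomial (Fin 3) K) (hF : F.IsHomogeneous n) : Q F := by
  have : Q (∑ v ∈ F.support, monomial v (coeff v F)) := by
    refine Finset.sum_induction _ _ hadd h0 ?_
    intro m hm
    have hk : coeff m F ≠ 0 := MvPolynomial.mem_support_iff.mp hm
    refine hmono m _ hk ?_
    have := hF hk
    rw [← deg3, Finsupp.degree_eq_weight_one]
    exact this
  rwa [← as_sum F] at this

lemma Ek_monomial (m : Fin 2 →₀ ℕ) (k : K) :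
    Ek (monomial m k) = monomial (2 • m) k := by
  rw [monomial2_eq, map_mul, map_mul, map_pow, map_pow, monomial2_eq (2 • m)]
  simp only [Ek, aeval_C, aeval_X, Matrix.cons_val_zero, Matrix.cons_val_one, Matrix.head_cons,
    Finsupp.smul_apply, smul_eq_mul, ← pow_mul]
  ring_nf
  rw [algebraMap_eq]
  try ring

lemma sg_monomial' (m : Fin 2 →₀ ℕ) (k : K) :
    sg (monomial m k) = (C k * X 0 ^ (m 0) * X 2 ^ (m 1) : MvPolynomial (Fin 3) K) := by
  rw [monomial2_eq, map_mul, map_mul, map_pow, map_pow]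
  simp [sg]

lemma ph_sg (p : MvPolynomial (Fin 2) K) : ph (sg p) = Ek p := by
  have : (ph.comp sg : MvPolynomial (Fin 2) K →ₐ[K] _) = Ek := by
    apply algHom_ext
    intro i; fin_cases i <;> simp [ph, sg, Ek]
  calc ph (sg p) = (ph.comp sg) p := rfl
    _ = Ek p := by rw [this]

lemma coeff_shift_Ek (u n : Fin 2 →₀ ℕ) (p : MvPolynomial (Fin 2) K) :
    coeff (u + 2 • n) (monomial u 1 * Ek p) = coeff n p := by
  induction p using MvPolynomial.induction_on' with
  | monomial m k =>
    rw [Ek_monomial, monomial_mul, one_mul, coeff_monomial, coeff_monomial]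
    by_cases h : m = n
    · subst h; simp
    · rw [if_neg, if_neg h]
      intro hh
      apply h
      ext i
      have := DFunLike.congr_fun hh i
      simp only [Finsupp.add_apply, Finsupp.smul_apply, smul_eq_mul] at this
      omega
  | add p q hp hq => rw [map_add, mul_add, coeff_add, coeff_add, hp, hq]

lemma coeff_shift_Ek_ne (u v : Fin 2 →₀ ℕ) (p : MvPolynomial (Fin 2) K)
    (h : coeff v (monomial u 1 * Ek p) ≠ 0) : ∃ n, v = u + 2 • n := by
  induction p using MvPolynomial.induction_on' with
  | monomial m k =>
    rw [Ek_monomial, monomial_mul, one_mul, coeff_monomial] at h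
    refine ⟨m, ?_⟩
    by_contra hne
    rw [if_neg (fun hh => hne hh.symm)] at h
    exact h rfl
  | add p q hp hq =>
    rw [map_add, mul_add, coeff_add] at h
    rcases (by by_contra hno; push_neg at hno; rw [hno.1, hno.2] at h; simp at h :
      coeff v (monomial u 1 * Ek p) ≠ 0 ∨ coeff v (monomial u 1 * Ek q) ≠ 0) with h' | h'
    · exact hp h'
    · exact hq h'

lemma ph_spanw (p : MvPolynomial (Fin 3) K) (h : p ∈ spanW K) : ph p = 0 := by
  rw [spanW, Ideal.mem_span_singleton] at h
  obtain ⟨r, rfl⟩ := h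
  rw [map_mul]
  have : ph ((X 1 : MvPolynomial (Fin 3) K) ^ 2 - X 0 * X 2) = 0 := by
    simp [ph]; ring
  rw [this, zero_mul]

lemma spanW_le_Iac (a c : ℕ) : spanW K ≤ Iac K a c := by
  rw [spanW, Ideal.span_le]
  intro p hp
  rcases hp with rfl
  apply Ideal.subset_span
  simp

lemma single2_apply₀ (p r : ℕ) : ((single 0 p + single 1 r : Fin 2 →₀ ℕ)) 0 = p := by simp
lemma single2_apply₁ (p r : ℕ) : ((single 0 p + single 1 r : Fin 2 →₀ ℕ)) 1 = r := by
  simp [Finsupp.single_apply]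

lemma core_red (q : ℕ) : ∀ (p r : ℕ) (k : K),
    ∃ f₀ f₁ : MvPolynomial (Fin 2) K,
      (∀ m ∈ f₀.support, m 0 + m 1 = p + q + r) ∧
      (∀ m ∈ f₁.support, m 0 + m 1 + 1 = p + q + r) ∧
      C k * X 0 ^ p * X 1 ^ q * X 2 ^ r - (sg f₀ + X 1 * sg f₁) ∈ spanW K := by
  induction q using Nat.strong_induction_on with
  | _ q IH =>
    match q with
    | 0 =>
      intro p r k
      classical
      refine ⟨monomial (single 0 p + single 1 r) k, 0, ?_, by simp, ?_⟩
      · intro m hm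
        rw [support_monomial] at hm
        by_cases hk : k = 0 <;> simp [hk] at hm
        subst hm; simp [single2_apply₀, single2_apply₁]
      · rw [sg_monomial']
        simp only [single2_apply₀, single2_apply₁, map_zero]
        have : (C k * X 0 ^ p * X 1 ^ 0 * X 2 ^ r : MvPolynomial (Fin 3) K)
            - (C k * X 0 ^ p * X 2 ^ r + X 1 * 0) = 0 := by ring
        rw [this]; exact zero_mem _
    | 1 =>
      intro p r k
      classical
      refine ⟨0, monomial (single 0 p + single 1 r) k, by simp, ?_, ?_⟩
      · intro m hm
        rw [support_monomial] at hm
        by_cases hk : k = 0 <;> simp [hk] at hm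
        subst hm; simp [single2_apply₀, single2_apply₁]; omega
      · rw [sg_monomial']
        simp only [single2_apply₀, single2_apply₁, map_zero]
        have : (C k * X 0 ^ p * X 1 ^ 1 * X 2 ^ r : MvPolynomial (Fin 3) K)
            - (0 + X 1 * (C k * X 0 ^ p * X 2 ^ r)) = 0 := by ring
        rw [this]; exact zero_mem _
    | (q' + 2) =>
      intro p r k
      obtain ⟨f₀, f₁, h₀, h₁, hmem⟩ := IH q' (by omega) (p + 1) (r + 1) k
      refine ⟨f₀, f₁, ?_, ?_, ?_⟩
      · intro m hm; have := h₀ m hm; omega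
      · intro m hm; have := h₁ m hm; omega
      · have key : C k * X 0 ^ p * X 1 ^ (q' + 2) * X 2 ^ r - (sg f₀ + X 1 * sg f₁)
            = (C k * X 0 ^ p * X 1 ^ q' * X 2 ^ r) * ((X 1 : MvPolynomial (Fin 3) K) ^ 2 - X 0 * X 2)
              + (C k * X 0 ^ (p + 1) * X 1 ^ q' * X 2 ^ (r + 1) - (sg f₀ + X 1 * sg f₁)) := by
          ring
        rw [key]
        exact add_mem (Ideal.mul_mem_left _ _ (Ideal.subset_span rfl)) hmem

lemma red {d : ℕ} (F : MvPolynomial (Fin 3) K) (hF : F.IsHomogeneous d) :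
    ∃ f₀ f₁ : MvPolynomial (Fin 2) K,
      (∀ m ∈ f₀.support, m 0 + m 1 = d) ∧
      (∀ m ∈ f₁.support, m 0 + m 1 + 1 = d) ∧
      F - (sg f₀ + X 1 * sg f₁) ∈ spanW K := by
  classical
  refine homog_ind (n := d) (fun F => ∃ f₀ f₁ : MvPolynomial (Fin 2) K,
      (∀ m ∈ f₀.support, m 0 + m 1 = d) ∧
      (∀ m ∈ f₁.support, m 0 + m 1 + 1 = d) ∧
      F - (sg f₀ + X 1 * sg f₁) ∈ spanW K) ?_ ?_ ?_ F hF
  · exact ⟨0, 0, by simp, by simp, by simp⟩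
  · rintro p q ⟨f₀, f₁, hf₀, hf₁, hfd⟩ ⟨g₀, g₁, hg₀, hg₁, hgd⟩
    refine ⟨f₀ + g₀, f₁ + g₁, ?_, ?_, ?_⟩
    · intro m hm
      rcases Finset.mem_union.mp (MvPolynomial.support_add hm) with h | h
      exacts [hf₀ m h, hg₀ m h]
    · intro m hm
      rcases Finset.mem_union.mp (MvPolynomial.support_add hm) with h | h
      exacts [hf₁ m h, hg₁ m h]
    · have : p + q - (sg (f₀ + g₀) + X 1 * sg (f₁ + g₁))
          = (p - (sg f₀ + X 1 * sg f₁)) + (q - (sg g₀ + X 1 * sg g₁)) := by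
        rw [map_add, map_add]; ring
      rw [this]; exact add_mem hfd hgd
  · intro m k _ hdeg
    obtain ⟨f₀, f₁, h₀, h₁, hmem⟩ := core_red (m 1) (m 0) (m 2) k
    rw [monomial3_eq]
    exact ⟨f₀, f₁, fun m' hm' => by have := h₀ m' hm'; omega,
      fun m' hm' => by have := h₁ m' hm'; omega, hmem⟩

lemma memI₀ (a c : ℕ) (f : MvPolynomial (Fin 2) K)
    (h : ∀ m ∈ f.support, c ≤ m 1) : sg f ∈ Iac K a c := by
  rw [show sg f = ∑ v ∈ f.support, sg (monomial v (coeff v f)) by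
    rw [← map_sum, ← as_sum]]
  refine Ideal.sum_mem _ ?_
  intro m hm
  rw [sg_monomial']
  have hc := h m hm
  have : (C (coeff m f) * X 0 ^ (m 0) * X 2 ^ (m 1) : MvPolynomial (Fin 3) K)
      = (C (coeff m f) * X 0 ^ (m 0) * X 2 ^ (m 1 - c)) * X 2 ^ c := by
    obtain ⟨t, ht⟩ : ∃ t, m 1 = t + c := ⟨m 1 - c, by omega⟩
    rw [ht, Nat.add_sub_cancel, pow_add]; ring
  rw [this]
  exact Ideal.mul_mem_left _ _ (Ideal.subset_span (by simp))

lemma memI₁ (a c : ℕ) (f : MvPolynomial (Fin 2) K)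
    (h : ∀ m ∈ f.support, c - 1 ≤ m 1) : (X 1 : MvPolynomial (Fin 3) K) * sg f ∈ Iac K a c := by
  rw [show (X 1 : MvPolynomial (Fin 3) K) * sg f
      = ∑ v ∈ f.support, X 1 * sg (monomial v (coeff v f)) by
    rw [← Finset.mul_sum, ← map_sum, ← as_sum]]
  refine Ideal.sum_mem _ ?_
  intro m hm
  rw [sg_monomial']
  have hc := h m hm
  have : (X 1 * (C (coeff m f) * X 0 ^ (m 0) * X 2 ^ (m 1)) : MvPolynomial (Fin 3) K)
      = (C (coeff m f) * X 0 ^ (m 0) * X 2 ^ (m 1 - (c - 1))) * (X 1 * X 2 ^ (c - 1)) := by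
    obtain ⟨t, ht⟩ : ∃ t, m 1 = t + (c - 1) := ⟨m 1 - (c - 1), by omega⟩
    rw [ht, Nat.add_sub_cancel, pow_add]; ring
  rw [this]
  exact Ideal.mul_mem_left _ _ (Ideal.subset_span (by simp))

lemma Iac_le_comap (a c : ℕ) (hc : 2 ≤ c) (hac : c ≤ a) :
    Iac K a c ≤ (Jac K a c).comap (ph : MvPolynomial (Fin 3) K →ₐ[K] _) := by
  rw [Iac, Ideal.span_le]
  intro p hp
  simp only [Set.mem_insert_iff, Set.mem_singleton_iff] at hp
  have hmem : ∀ e ∈ Jset a c, (monomial e (1:K)) ∈ Jac K a c := fun e he =>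
    Ideal.subset_span ⟨e, he, rfl⟩
  rcases hp with rfl | rfl | rfl | rfl | rfl <;>
    simp only [Ideal.mem_comap, SetLike.mem_coe, map_sub, map_mul, map_pow, ph, aeval_X,
      Matrix.cons_val_zero, Matrix.cons_val_one, Matrix.head_cons, Matrix.cons_val_two,
      Matrix.tail_cons]
  · have : ((X 0 : MvPolynomial (Fin 2) K) ^ 2) ^ a = monomial (single 0 (2 * a)) 1 := by
      rw [← pow_mul, X_pow_eq_monomial, mul_comm]
    rw [this]; exact hmem _ (Or.inl rfl)
  · have : ((X 0 * X 1 : MvPolynomial (Fin 2) K) ^ 2 - X 0 ^ 2 * X 1 ^ 2) = 0 := by ring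
    rw [this]; exact zero_mem _
  · have : ((X 1 : MvPolynomial (Fin 2) K) ^ 2) ^ c = monomial (single 1 (2 * c)) 1 := by
      rw [← pow_mul, X_pow_eq_monomial, mul_comm]
    rw [this]; exact hmem _ (Or.inr (Or.inr (Or.inr rfl)))
  · have : ((X 0 : MvPolynomial (Fin 2) K) ^ 2) ^ (a - 1) * (X 0 * X 1)
        = monomial (single 0 (2 * a - 1) + single 1 1) 1 := by
      have e1 : 2 * a - 1 = 2 * (a - 1) + 1 := by omega
      have : ((X 0 : MvPolynomial (Fin 2) K) ^ 2) ^ (a - 1) * (X 0 * X 1)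
          = X 0 ^ (2 * (a - 1) + 1) * X 1 ^ 1 := by rw [← pow_mul]; ring
      rw [this, ← e1, X_pow_eq_monomial, X_pow_eq_monomial, monomial_mul, one_mul]
    rw [this]; exact hmem _ (Or.inr (Or.inl rfl))
  · have : (X 0 * X 1 : MvPolynomial (Fin 2) K) * ((X 1 : MvPolynomial (Fin 2) K) ^ 2) ^ (c - 1)
        = monomial (single 0 1 + single 1 (2 * c - 1)) 1 := by
      have e1 : 2 * c - 1 = 2 * (c - 1) + 1 := by omega
      have : (X 0 * X 1 : MvPolynomial (Fin 2) K) * ((X 1 : MvPolynomial (Fin 2) K) ^ 2) ^ (c - 1)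
          = X 0 ^ 1 * X 1 ^ (2 * (c - 1) + 1) := by rw [← pow_mul]; ring
      rw [this, ← e1, X_pow_eq_monomial, X_pow_eq_monomial, monomial_mul, one_mul]
    rw [this]; exact hmem _ (Or.inr (Or.inr (Or.inl rfl)))

/-- the key injectivity statement -/
lemma key_inj (a c : ℕ) (hc : 2 ≤ c) (hac : c ≤ a) (d : ℕ) (hd : d + 2 ≤ a)
    (F : MvPolynomial (Fin 3) K) (hF : F.IsHomogeneous d)
    (h : X 0 * F ∈ Iac K a c) : F ∈ Iac K a c := by
  obtain ⟨f₀, f₁, h₀, h₁, hdiff⟩ := red F hF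
  set G : MvPolynomial (Fin 3) K := sg f₀ + X 1 * sg f₁ with hG
  have hFG : F - G ∈ Iac K a c := spanW_le_Iac a c hdiff
  have hXG : X 0 * G ∈ Iac K a c := by
    have e : X 0 * G = X 0 * F - X 0 * (F - G) := by ring
    rw [e]; exact sub_mem h (Ideal.mul_mem_left _ _ hFG)
  have hphi : ph (X 0 * G) ∈ Jac K a c := Iac_le_comap a c hc hac hXG
  set u₀ : Fin 2 →₀ ℕ := single 0 2 with hu₀
  set u₁ : Fin 2 →₀ ℕ := single 0 3 + single 1 1 with hu₁
  have hcomp : ph (X 0 * G) = monomial u₀ 1 * Ek f₀ + monomial u₁ 1 * Ek f₁ := by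
    rw [hG, map_mul, map_add, map_mul, ph_sg, ph_sg]
    have e0 : ph (X 0 : MvPolynomial (Fin 3) K) = X 0 ^ 2 := by simp [ph]
    have e1 : ph (X 1 : MvPolynomial (Fin 3) K) = X 0 * X 1 := by simp [ph]
    have e2 : (monomial u₀ (1:K) : MvPolynomial (Fin 2) K) = X 0 ^ 2 := by
      rw [hu₀, ← X_pow_eq_monomial]
    have e3 : (monomial u₁ (1:K) : MvPolynomial (Fin 2) K) = X 0 ^ 3 * X 1 ^ 1 := by
      rw [hu₁, X_pow_eq_monomial, X_pow_eq_monomial, monomial_mul, one_mul]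
    rw [e0, e1, e2, e3]
    ring
  rw [Jac, mem_ideal_span_monomial_image] at hphi
  -- conditions on f₀
  have hc₀ : ∀ m ∈ f₀.support, c ≤ m 1 := by
    intro m hm
    have hm1 : coeff (u₀ + 2 • m) (ph (X 0 * G)) ≠ 0 := by
      rw [hcomp, coeff_add, coeff_shift_Ek]
      have : coeff (u₀ + 2 • m) (monomial u₁ 1 * Ek f₁) = 0 := by
        by_contra hne
        obtain ⟨n, hn⟩ := coeff_shift_Ek_ne _ _ _ hne
        have := DFunLike.congr_fun hn 1
        simp [hu₀, hu₁, Finsupp.single_apply] at this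
        omega
      rw [this, add_zero]
      exact MvPolynomial.mem_support_iff.mp hm
    obtain ⟨e, he, hle⟩ := hphi _ (MvPolynomial.mem_support_iff.mpr hm1)
    have hdm := h₀ m hm
    have hle0 := Finsupp.le_def.mp hle 0
    have hle1 := Finsupp.le_def.mp hle 1
    rcases he with rfl | rfl | rfl | rfl <;>
      simp [hu₀, Finsupp.single_apply] at hle0 hle1 <;> omega
  have hc₁ : ∀ m ∈ f₁.support, c - 1 ≤ m 1 := by
    intro m hm
    have hm1 : coeff (u₁ + 2 • m) (ph (X 0 * G)) ≠ 0 := by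
      rw [hcomp, coeff_add, coeff_shift_Ek]
      have : coeff (u₁ + 2 • m) (monomial u₀ 1 * Ek f₀) = 0 := by
        by_contra hne
        obtain ⟨n, hn⟩ := coeff_shift_Ek_ne _ _ _ hne
        have := DFunLike.congr_fun hn 1
        simp [hu₀, hu₁, Finsupp.single_apply] at this
        omega
      rw [this, zero_add]
      exact MvPolynomial.mem_support_iff.mp hm
    obtain ⟨e, he, hle⟩ := hphi _ (MvPolynomial.mem_support_iff.mpr hm1)
    have hdm := h₁ m hm
    have hle0 := Finsupp.le_def.mp hle 0
    have hle1 := Finsupp.le_def.mp hle 1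
    rcases he with rfl | rfl | rfl | rfl <;>
      simp [hu₁, Finsupp.single_apply] at hle0 hle1 <;> omega
  have hGI : G ∈ Iac K a c := add_mem (memI₀ a c f₀ hc₀) (memI₁ a c f₁ hc₁)
  have : F = (F - G) + G := by ring
  rw [this]; exact add_mem hFG hGI

/-- the key surjectivity statement, monomial case -/
lemma core_surj (a c : ℕ) (hc : 2 ≤ c) (hac : c ≤ a) (q : ℕ) :
    ∀ (p r : ℕ) (k : K) (i : ℕ), p + q + r = i + 1 → a ≤ i + 1 →
    ∃ F : MvPolynomial (Fin 3) K, F.IsHomogeneous i ∧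
      C k * X 0 ^ p * X 1 ^ q * X 2 ^ r - X 0 * F ∈ Iac K a c := by
  induction q using Nat.strong_induction_on with
  | _ q IH =>
    match q with
    | 0 =>
      intro p r k i hdeg hi
      by_cases hr : c ≤ r
      · refine ⟨0, isHomogeneous_zero _ _ _, ?_⟩
        obtain ⟨t, rfl⟩ : ∃ t, r = t + c := ⟨r - c, by omega⟩
        have e : (C k * X 0 ^ p * X 1 ^ 0 * X 2 ^ (t + c) - X 0 * 0 : MvPolynomial (Fin 3) K)
            = (C k * X 0 ^ p * X 2 ^ t) * X 2 ^ c := by rw [pow_add]; ring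
        rw [e]
        exact Ideal.mul_mem_left _ _ (Ideal.subset_span (by simp))
      · obtain ⟨p', rfl⟩ : ∃ p', p = p' + 1 := ⟨p - 1, by omega⟩
        refine ⟨C k * X 0 ^ p' * X 2 ^ r, ?_, ?_⟩
        · have h1 : (C k * X 0 ^ p' * X 2 ^ r : MvPolynomial (Fin 3) K).IsHomogeneous
              ((0 + p') + r) :=
            ((isHomogeneous_C _ k).mul (isHomogeneous_X_pow _ _)).mul (isHomogeneous_X_pow _ _)
          have : (0 + p') + r = i := by omega
          rwa [this] at h1
        · have e : (C k * X 0 ^ (p' + 1) * X 1 ^ 0 * X 2 ^ r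
              - X 0 * (C k * X 0 ^ p' * X 2 ^ r) : MvPolynomial (Fin 3) K) = 0 := by rw [pow_add]; ring
          rw [e]; exact zero_mem _
    | 1 =>
      intro p r k i hdeg hi
      by_cases hr : c - 1 ≤ r
      · refine ⟨0, isHomogeneous_zero _ _ _, ?_⟩
        obtain ⟨t, rfl⟩ : ∃ t, r = t + (c - 1) := ⟨r - (c - 1), by omega⟩
        have e : (C k * X 0 ^ p * X 1 ^ 1 * X 2 ^ (t + (c - 1)) - X 0 * 0 : MvPolynomial (Fin 3) K)
            = (C k * X 0 ^ p * X 2 ^ t) * (X 1 * X 2 ^ (c - 1)) := by rw [pow_add]; ring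
        rw [e]
        exact Ideal.mul_mem_left _ _ (Ideal.subset_span (by simp))
      · obtain ⟨p', rfl⟩ : ∃ p', p = p' + 1 := ⟨p - 1, by omega⟩
        refine ⟨C k * X 0 ^ p' * X 1 ^ 1 * X 2 ^ r, ?_, ?_⟩
        · have h1 : (C k * X 0 ^ p' * X 1 ^ 1 * X 2 ^ r : MvPolynomial (Fin 3) K).IsHomogeneous
              (((0 + p') + 1) + r) :=
            (((isHomogeneous_C _ k).mul (isHomogeneous_X_pow _ _)).mul
              (isHomogeneous_X_pow _ _)).mul (isHomogeneous_X_pow _ _)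
          have : ((0 + p') + 1) + r = i := by omega
          rwa [this] at h1
        · have e : (C k * X 0 ^ (p' + 1) * X 1 ^ 1 * X 2 ^ r
              - X 0 * (C k * X 0 ^ p' * X 1 ^ 1 * X 2 ^ r) : MvPolynomial (Fin 3) K) = 0 := by rw [pow_add]; ring
          rw [e]; exact zero_mem _
    | (q' + 2) =>
      intro p r k i hdeg hi
      obtain ⟨F, hFh, hFm⟩ := IH q' (by omega) (p + 1) (r + 1) k i (by omega) hi
      refine ⟨F, hFh, ?_⟩
      have e : (C k * X 0 ^ p * X 1 ^ (q' + 2) * X 2 ^ r - X 0 * F : MvPolynomial (Fin 3) K)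
          = (C k * X 0 ^ p * X 1 ^ q' * X 2 ^ r) * ((X 1 : MvPolynomial (Fin 3) K) ^ 2 - X 0 * X 2)
            + (C k * X 0 ^ (p + 1) * X 1 ^ q' * X 2 ^ (r + 1) - X 0 * F) := by ring
      rw [e]
      refine add_mem (Ideal.mul_mem_left _ _ (Ideal.subset_span (by simp))) hFm

lemma surj_glue (a c : ℕ) (hc : 2 ≤ c) (hac : c ≤ a) (i : ℕ) (hi : a ≤ i + 1)
    (G : MvPolynomial (Fin 3) K) (hG : G.IsHomogeneous (i + 1)) :
    ∃ F : MvPolynomial (Fin 3) K, F.IsHomogeneous i ∧ G - X 0 * F ∈ Iac K a c := by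
  refine homog_ind (n := i + 1) (fun G => ∃ F : MvPolynomial (Fin 3) K,
      F.IsHomogeneous i ∧ G - X 0 * F ∈ Iac K a c) ?_ ?_ ?_ G hG
  · exact ⟨0, isHomogeneous_zero _ _ _, by simp⟩
  · rintro p q ⟨F₁, hF₁, hm₁⟩ ⟨F₂, hF₂, hm₂⟩
    refine ⟨F₁ + F₂, hF₁.add hF₂, ?_⟩
    have e : p + q - X 0 * (F₁ + F₂) = (p - X 0 * F₁) + (q - X 0 * F₂) := by ring
    rw [e]; exact add_mem hm₁ hm₂
  · intro m k _ hdeg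
    obtain ⟨F, hFh, hFm⟩ := core_surj a c hc hac (m 1) (m 0) (m 2) k i (by omega) hi
    rw [monomial3_eq]
    exact ⟨F, hFh, hFm⟩

end WLPAux

theorem stmt_4 (K : Type*) [Field K] [CharZero K] (a c : ℕ)
    (hc : 2 ≤ c) (hac : c ≤ a) :
    hasWLP K (Ideal.span {(X 0 : MvPolynomial (Fin 3) K) ^ a,
      X 1 ^ 2 - X 0 * X 2, X 2 ^ c,
      X 0 ^ (a - 1) * X 1, X 1 * X 2 ^ (c - 1)}) := by
  classical
  set I : Ideal (MvPolynomial (Fin 3) K) := Ideal.span {(X 0 : MvPolynomial (Fin 3) K) ^ a,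
      X 1 ^ 2 - X 0 * X 2, X 2 ^ c,
      X 0 ^ (a - 1) * X 1, X 1 * X 2 ^ (c - 1)} with hI
  have hIeq : I = WLPAux.Iac K a c := rfl
  refine ⟨X 0, isHomogeneous_X _ _, ?_⟩
  intro i
  rcases le_or_gt (i + 2) a with hia | hia
  · -- injective range
    left
    intro u hu v hv huv
    obtain ⟨F, hFmem, hFu⟩ := Submodule.mem_map.mp hu
    obtain ⟨G, hGmem, hGv⟩ := Submodule.mem_map.mp hv
    rw [AlgHom.toLinearMap_apply, Ideal.Quotient.mkₐ_eq_mk] at hFu hGv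
    subst hFu hGv
    rw [← map_mul, ← map_mul, Ideal.Quotient.eq] at huv
    have hFGhom : (F - G).IsHomogeneous i := by
      have := (MvPolynomial.homogeneousSubmodule (Fin 3) K i).sub_mem hFmem hGmem
      exact (mem_homogeneousSubmodule _ _).mp this
    have hXFG : X 0 * (F - G) ∈ I := by
      have e : X 0 * (F - G) = X 0 * F - X 0 * G := by ring
      rw [e]; exact huv
    have hFG : F - G ∈ I := by
      rw [hIeq] at hXFG ⊢
      exact WLPAux.key_inj a c hc hac i hia (F - G) hFGhom hXFG
    exact (Ideal.Quotient.eq).mpr hFG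
  · -- surjective range
    right
    intro w hw
    obtain ⟨G, hGmem, hGw⟩ := Submodule.mem_map.mp hw
    rw [AlgHom.toLinearMap_apply, Ideal.Quotient.mkₐ_eq_mk] at hGw
    subst hGw
    obtain ⟨F, hFh, hFm⟩ := WLPAux.surj_glue a c hc hac i (by omega) G
      ((mem_homogeneousSubmodule _ _).mp hGmem)
    refine ⟨Ideal.Quotient.mk I F, ?_, ?_⟩
    · exact Submodule.mem_map.mpr ⟨F, (mem_homogeneousSubmodule _ _).mpr hFh,
        by rw [AlgHom.toLinearMap_apply, Ideal.Quotient.mkₐ_eq_mk]⟩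
    · rw [← map_mul]
      exact ((Ideal.Quotient.eq).mpr (by rw [hIeq]; exact hFm)).symm
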